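/- Let σ ⊆ ℝ^ρ be a closed pointed full-dimensional cone (to be thought of as Nef(X)), D₀ an interior point of σ, m(·) the associated minimum function m(E) = min{φ(E) : φ ∈ σ^∨ ∩ (H=1)} for a fixed H ∈ interior(σ), and e_1,…,e_ρ a basis of ℤ^ρ with cube vertices v = ±e_1 ± ⋯ ± e_ρ. Fix integers r ≥ 1 and d ≥ 2r, and let λ be an integer with λ ≥ 2d − r − 1 and λ ≥ (3d − r)/(d − r) − d(2d − r)·m(v)/((d − r)·m(D₀)) for every vertex v. Then for every Δ ∈ σ there exists a lattice point Δ₁ ∈ ℤ^ρ such that all three of the following lie in σ: (i) Δ₁; (ii) (λ − d − 1)·D₀ + Δ − d·Δ₁; (iii) (2d − r − λ − 1)·D₀ − Δ + (2d − r)·Δ₁. -/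

import Mathlib

set_option maxHeartbeats 2000000


/-- The embedding of the lattice `ℤ^ρ` into `ℝ^ρ`. -/
def latCoe {ρ : ℕ} (z : Fin ρ → ℤ) : Fin ρ → ℝ := fun i => (z i : ℝ)

/-- Let `σ ⊆ ℝ^ρ` be a closed pointed full-dimensional cone
(the nef cone), `D₀` an interior point of `σ`, and `m` the minimum function
`m(E) = min {φ(E) : φ ∈ σ^∨, φ(H) = 1}` for a fixed `H ∈ interior σ` (here
encoded by the `IsLeast` hypothesis `hm`).  The lattice is `ℤ^ρ` with its
standard basis, whose cube vertices are the vectors `v` with all coordinates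
`±1`.  Fix integers `r ≥ 1`, `d ≥ 2r`, and `λ` with `λ ≥ 2d − r − 1` and
`λ ≥ (3d − r)/(d − r) − d(2d − r)·m(v)/((d − r)·m(D₀))` for every cube vertex
`v`.  Then for every `Δ ∈ σ` there is a lattice point `Δ₁ ∈ ℤ^ρ` with:
(i) `Δ₁ ∈ σ`; (ii) `(λ − d − 1)·D₀ + Δ − d·Δ₁ ∈ σ`;
(iii) `(2d − r − λ − 1)·D₀ − Δ + (2d − r)·Δ₁ ∈ σ`. -/
theorem stmt_14 (ρ : ℕ) (σ : Set (Fin ρ → ℝ))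
    (hclosed : IsClosed σ) (hconv : Convex ℝ σ)
    (hcone : ∀ c : ℝ, 0 < c → ∀ x ∈ σ, c • x ∈ σ)
    (hpointed : ∀ x ∈ σ, -x ∈ σ → x = 0)
    (D₀ : Fin ρ → ℝ) (hD₀ : D₀ ∈ interior σ)
    (H : Fin ρ → ℝ) (hH : H ∈ interior σ)
    (m : (Fin ρ → ℝ) → ℝ)
    (hm : ∀ E : Fin ρ → ℝ, IsLeast {t : ℝ | ∃ φ : (Fin ρ → ℝ) →ₗ[ℝ] ℝ,
      (∀ x ∈ σ, 0 ≤ φ x) ∧ φ H = 1 ∧ t = φ E} (m E))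
    (r d lam : ℤ) (hr : 1 ≤ r) (hd : 2 * r ≤ d)
    (hlam1 : 2 * d - r - 1 ≤ lam)
    (hlam2 : ∀ v : Fin ρ → ℝ, (∀ i, v i = 1 ∨ v i = -1) →
      ((3 * d - r : ℤ) : ℝ) / ((d - r : ℤ) : ℝ) -
        ((d * (2 * d - r) : ℤ) : ℝ) * m v / (((d - r : ℤ) : ℝ) * m D₀)
        ≤ (lam : ℝ)) :
    ∀ Δ ∈ σ, ∃ Δ₁ : Fin ρ → ℤ,
      latCoe Δ₁ ∈ σ ∧
      ((lam - d - 1 : ℤ) : ℝ) • D₀ + Δ - ((d : ℤ) : ℝ) • latCoe Δ₁ ∈ σ ∧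
      ((2 * d - r - lam - 1 : ℤ) : ℝ) • D₀ - Δ + ((2 * d - r : ℤ) : ℝ) • latCoe Δ₁ ∈ σ := by
  intro Δ hΔ
  have hD₀σ : D₀ ∈ σ := interior_subset hD₀
  -- 0 ∈ σ
  have hzero : (0 : Fin ρ → ℝ) ∈ σ := by
    have ht : Filter.Tendsto (fun n : ℕ => (1/((n:ℝ)+1)) • D₀) Filter.atTop (nhds 0) := by
      have h := (tendsto_one_div_add_atTop_nhds_zero_nat (𝕜 := ℝ)).smul_const D₀
      simpa using h
    exact hclosed.mem_of_tendsto ht (Filter.Eventually.of_forall fun n =>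
      hcone _ (by positivity) _ hD₀σ)
  -- membership from dual nonnegativity
  have hmem : ∀ x : Fin ρ → ℝ, 0 ≤ m x → x ∈ σ := by
    intro x hx
    by_contra hxs
    obtain ⟨f, u0, hfu, hfb⟩ := geometric_hahn_banach_point_closed hconv hclosed hxs
    have hfpos : ∀ y ∈ σ, 0 ≤ f y := by
      intro y hy
      by_contra hy'
      push_neg at hy'
      have hfy : (0:ℝ) < -f y := by linarith
      have hc0 : 0 < (|u0| + 1) / (-f y) := div_pos (by positivity) hfy
      have h1 := hfb _ (hcone _ hc0 y hy)
      rw [map_smul, smul_eq_mul] at h1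
      have h2 : (|u0| + 1) / (-f y) * f y = -(|u0| + 1) := by
        rw [div_neg, neg_mul, div_mul_cancel₀ _ (ne_of_lt hy')]
      nlinarith [abs_nonneg u0, neg_abs_le u0]
    have hu0 : u0 < 0 := by have := hfb 0 hzero; simpa using this
    have hfH : 0 ≤ f H := hfpos H (interior_subset hH)
    rcases eq_or_lt_of_le hfH with h0 | hpos
    · -- f H = 0 : show 0 ≤ f x via interior ball around H
      obtain ⟨ε, hε, hball⟩ := Metric.mem_nhds_iff.mp (mem_interior_iff_mem_nhds.mp hH)
      have hc0 : 0 < ε / (2 * (‖x‖ + 1)) := by positivity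
      have hmem' : H + (ε / (2 * (‖x‖ + 1))) • x ∈ σ := by
        apply hball
        rw [Metric.mem_ball, dist_eq_norm]
        have : H + (ε / (2 * (‖x‖ + 1))) • x - H = (ε / (2 * (‖x‖ + 1))) • x := by ring_nf
        rw [this, norm_smul, Real.norm_eq_abs, abs_of_pos hc0, div_mul_eq_mul_div,
          div_lt_iff₀ (by positivity)]
        nlinarith [norm_nonneg x, hε]
      have h3 := hfpos _ hmem'
      rw [map_add, map_smul, smul_eq_mul, ← h0] at h3
      have h4 : 0 ≤ f x := by nlinarith
      linarith
    · obtain ⟨ψ, hψ⟩ : ∃ x : (Fin ρ → ℝ) →ₗ[ℝ] ℝ, x = (f H)⁻¹ • (f : (Fin ρ → ℝ) →ₗ[ℝ] ℝ) := ⟨_, rfl⟩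
      have hψap : ∀ z, ψ z = (f H)⁻¹ * f z := by
        intro z; simp [hψ]
      have h1 : ∀ z ∈ σ, 0 ≤ ψ z := fun z hz => by
        rw [hψap]; exact mul_nonneg (inv_nonneg.2 hfH) (hfpos z hz)
      have h2 : ψ H = 1 := by rw [hψap, inv_mul_cancel₀ (ne_of_gt hpos)]
      have h3 : m x ≤ ψ x := (hm x).2 ⟨ψ, h1, h2, rfl⟩
      have h4 : ψ x < 0 := by
        rw [hψap]
        exact mul_neg_of_pos_of_neg (inv_pos.2 hpos) (lt_trans hfu hu0)
      linarith
  -- superadditivity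
  have hsuper : ∀ a b : Fin ρ → ℝ, m a + m b ≤ m (a + b) := by
    intro a b
    obtain ⟨φ, h1, h2, h3⟩ := (hm (a+b)).1
    have ha := (hm a).2 ⟨φ, h1, h2, rfl⟩
    have hb := (hm b).2 ⟨φ, h1, h2, rfl⟩
    rw [h3, map_add]; linarith
  -- scaling (one direction)
  have hsmul : ∀ (c : ℝ) (a : Fin ρ → ℝ), 0 ≤ c → c * m a ≤ m (c • a) := by
    intro c a hc
    obtain ⟨φ, h1, h2, h3⟩ := (hm (c • a)).1
    have ha := (hm a).2 ⟨φ, h1, h2, rfl⟩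
    rw [h3, map_smul, smul_eq_mul]
    exact mul_le_mul_of_nonneg_left ha hc
  -- m nonneg on σ
  have hmσ : ∀ x ∈ σ, 0 ≤ m x := by
    intro x hx
    obtain ⟨φ, h1, h2, h3⟩ := (hm x).1
    rw [h3]; exact h1 x hx
  -- m D₀ > 0
  have hmD₀ : 0 < m D₀ := by
    obtain ⟨φ, h1, h2, h3⟩ := (hm D₀).1
    obtain ⟨ε, hε, hball⟩ := Metric.mem_nhds_iff.mp (mem_interior_iff_mem_nhds.mp hD₀)
    have hc0 : 0 < ε / (2 * (‖H‖ + 1)) := by positivity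
    have hmem' : D₀ - (ε / (2 * (‖H‖ + 1))) • H ∈ σ := by
      apply hball
      rw [Metric.mem_ball, dist_eq_norm]
      have : D₀ - (ε / (2 * (‖H‖ + 1))) • H - D₀ = -((ε / (2 * (‖H‖ + 1))) • H) := by ring_nf
      rw [this, norm_neg, norm_smul, Real.norm_eq_abs, abs_of_pos hc0, div_mul_eq_mul_div,
        div_lt_iff₀ (by positivity)]
      nlinarith [norm_nonneg H, hε]
    have h4 := h1 _ hmem'
    rw [map_sub, map_smul, smul_eq_mul, h2, mul_one] at h4
    rw [h3]; linarith
  -- cube bound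
  have hcube : ∀ x : Fin ρ → ℝ, (∀ i, |x i| ≤ 1) →
      ∃ v : Fin ρ → ℝ, (∀ i, v i = 1 ∨ v i = -1) ∧ m v ≤ m x := by
    intro x hx
    obtain ⟨φ, hφ1, hφ2, hφ3⟩ := (hm x).1
    obtain ⟨v, hv⟩ : ∃ x : Fin ρ → ℝ, x = fun i => if 0 ≤ φ (fun j => if i = j then 1 else 0) then -1 else 1 := ⟨_, rfl⟩
    refine ⟨v, fun i => ?_, ?_⟩
    · by_cases h : 0 ≤ φ (fun j => if i = j then 1 else 0) <;> simp [hv, h]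
    · have h1 : m v ≤ φ v := (hm v).2 ⟨φ, hφ1, hφ2, rfl⟩
      have h2 : φ v ≤ φ x := by
        rw [LinearMap.pi_apply_eq_sum_univ φ v, LinearMap.pi_apply_eq_sum_univ φ x]
        apply Finset.sum_le_sum
        intro i _
        by_cases h : 0 ≤ φ (fun j => if i = j then 1 else 0)
        · have hvi : v i = -1 := by simp [hv, h]
          rw [hvi, smul_eq_mul, smul_eq_mul]
          have := (abs_le.mp (hx i)).1
          nlinarith
        · have hvi : v i = 1 := by simp [hv, h]
          push_neg at h
          rw [hvi, smul_eq_mul, smul_eq_mul]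
          have := (abs_le.mp (hx i)).2
          nlinarith
      rw [hφ3]; linarith
  -- ρ = 0 is contradictory with hm H
  rcases Nat.eq_zero_or_pos ρ with hρ | hρ
  · exfalso
    subst hρ
    obtain ⟨φ, h1, h2, h3⟩ := (hm H).1
    have : H = 0 := funext fun i => i.elim0
    rw [this, map_zero] at h2
    exact one_ne_zero h2.symm
  -- real constants
  obtain ⟨L, hLdef⟩ : ∃ x : ℝ, x = (lam : ℝ) := ⟨_, rfl⟩
  obtain ⟨D, hDdef⟩ : ∃ x : ℝ, x = (d : ℝ) := ⟨_, rfl⟩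
  obtain ⟨R, hRdef⟩ : ∃ x : ℝ, x = (r : ℝ) := ⟨_, rfl⟩
  obtain ⟨Nr, hNrdef⟩ : ∃ x : ℝ, x = 2 * D - R := ⟨_, rfl⟩
  have hR1 : 1 ≤ R := by rw [hRdef]; exact_mod_cast hr
  have hDR : 2 * R ≤ D := by rw [hRdef, hDdef]; exact_mod_cast hd
  have hDRpos : 0 < D - R := by linarith
  have hDpos : 0 < D := by linarith
  have hNrpos : 0 < Nr := by rw [hNrdef]; linarith
  have hL1 : 2 * D - R - 1 ≤ L := by
    rw [hLdef, hDdef, hRdef]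
    have : ((2 * d - r - 1 : ℤ) : ℝ) ≤ (lam : ℝ) := by exact_mod_cast hlam1
    push_cast at this; linarith
  have hLN : 0 ≤ L + 1 - Nr := by rw [hNrdef]; linarith
  have hD0 : D ≠ 0 := ne_of_gt hDpos
  have hNr0 : Nr ≠ 0 := ne_of_gt hNrpos
  have h2DR : 2 * D - R ≠ 0 := by rw [← hNrdef]; exact hNr0
  have hDR0 : D - R ≠ 0 := ne_of_gt hDRpos
  obtain ⟨α, hαdef⟩ : ∃ x : ℝ, x = ((D - R) * L - 3 * D + R) / (D * Nr) := ⟨_, rfl⟩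
  -- vertex inequality from hlam2
  have hvert : ∀ v : Fin ρ → ℝ, (∀ i, v i = 1 ∨ v i = -1) → 0 ≤ α * m D₀ + m v := by
    intro v hv
    have h := hlam2 v hv
    push_cast at h
    rw [← hLdef, ← hDdef, ← hRdef] at h
    have heq : (3 * D - R) / (D - R) - D * (2 * D - R) * m v / ((D - R) * m D₀)
        = ((3 * D - R) * m D₀ - D * Nr * m v) / ((D - R) * m D₀) := by
      rw [hNrdef]; field_simp [hDR0, ne_of_gt hmD₀]
    rw [heq, div_le_iff₀ (by positivity)] at h
    have hgoal : α * m D₀ + m v = (((D - R) * L - 3 * D + R) * m D₀ + D * Nr * m v) / (D * Nr) := by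
      rw [hαdef]; field_simp [hD0, hNr0]
    rw [hgoal]
    apply div_nonneg _ (by positivity)
    nlinarith
  -- α ≥ 0
  have hα : 0 ≤ α := by
    by_contra hneg
    push_neg at hneg
    have hv1 := hvert (fun _ => 1) (fun _ => Or.inl rfl)
    have hv2 := hvert (fun _ => -1) (fun _ => Or.inr rfl)
    have h1 : (fun _ => (1:ℝ)) ∈ σ := hmem _ (by nlinarith)
    have h2 : (fun _ => (-1:ℝ)) ∈ σ := hmem _ (by nlinarith)
    have h2' : -(fun _ => (1:ℝ)) ∈ σ := by
      have : -(fun _ : Fin ρ => (1:ℝ)) = (fun _ : Fin ρ => (-1:ℝ)) := by funext i; simp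
      rw [this]; exact h2
    have h3 := hpointed _ h1 h2'
    have h4 := congrFun h3 ⟨0, hρ⟩
    simp at h4
  -- the construction
  obtain ⟨α₂, hα₂def⟩ : ∃ x : ℝ, x = α / 2 + (L + 1 - Nr) / Nr := ⟨_, rfl⟩
  obtain ⟨p, hpdef⟩ : ∃ x : Fin ρ → ℝ, x = fun i => α₂ * D₀ i + Δ i / D := ⟨_, rfl⟩
  obtain ⟨Δ₁, hΔ₁def⟩ : ∃ x : Fin ρ → ℤ, x = fun i => ⌊p i + 1/2⌋ := ⟨_, rfl⟩
  obtain ⟨u, hudef⟩ : ∃ x : Fin ρ → ℝ, x = fun i => 2 * ((Δ₁ i : ℝ) - p i) := ⟨_, rfl⟩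
  have hu : ∀ i, |u i| ≤ 1 := by
    intro i
    have h1 := Int.floor_le (p i + 1/2)
    have h2 := Int.sub_one_lt_floor (p i + 1/2)
    simp only [hudef, hΔ₁def]
    rw [abs_le]
    constructor <;> [linarith; linarith]
  have hlat : ∀ i, latCoe Δ₁ i = p i + u i / 2 := by
    simp only [hudef, latCoe]
    intro i
    ring
  -- scalar identities
  have hA : L - D - 1 - D * α₂ = D * α / 2 := by
    rw [hα₂def, hαdef, hNrdef]
    field_simp [hD0, h2DR, (by rwa [mul_comm] : D * 2 - R ≠ 0)]
    ring
  have hB : Nr - L - 1 + Nr * α₂ = Nr * α / 2 := by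
    rw [hα₂def, hαdef]
    field_simp [hD0, hNr0]
    ring
  -- expression identities
  have hE2 : ((lam - d - 1 : ℤ) : ℝ) • D₀ + Δ - ((d : ℤ) : ℝ) • latCoe Δ₁
      = (D * α / 2) • D₀ + (D / 2) • (-u) := by
    funext i
    simp only [Pi.add_apply, Pi.sub_apply, Pi.smul_apply, Pi.neg_apply, smul_eq_mul]
    rw [hlat i]
    simp only [hpdef]
    push_cast
    rw [← hLdef, ← hDdef]
    have hD' : D * (Δ i / D) = Δ i := mul_div_cancel₀ _ (ne_of_gt hDpos)
    have expand : (L - D - 1) * D₀ i + Δ i - D * (α₂ * D₀ i + Δ i / D + u i / 2)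
        = (L - D - 1 - D * α₂) * D₀ i + (Δ i - D * (Δ i / D)) - D / 2 * u i := by ring
    rw [expand, hD', hA]
    ring
  have hE3 : ((2 * d - r - lam - 1 : ℤ) : ℝ) • D₀ - Δ + ((2 * d - r : ℤ) : ℝ) • latCoe Δ₁
      = (Nr * α / 2) • D₀ + ((Nr / 2) • u + ((D - R) / D) • Δ) := by
    funext i
    simp only [Pi.add_apply, Pi.sub_apply, Pi.smul_apply, smul_eq_mul]
    rw [hlat i]
    simp only [hpdef]
    push_cast
    rw [← hLdef, ← hDdef, ← hRdef]
    have h2D : (2 * D - R) = Nr := by rw [hNrdef]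
    rw [h2D]
    have hD' : Nr * (Δ i / D) = Nr / D * Δ i := by ring
    have expand : (Nr - L - 1) * D₀ i - Δ i + Nr * (α₂ * D₀ i + Δ i / D + u i / 2)
        = (Nr - L - 1 + Nr * α₂) * D₀ i + (Nr / D - 1) * Δ i + Nr / 2 * u i := by ring
    rw [expand, hB]
    have hc : Nr / D - 1 = (D - R) / D := by
      rw [hNrdef]; field_simp; ring
    rw [hc]
    ring
  -- m-bounds
  have hm2 : 0 ≤ m (((lam - d - 1 : ℤ) : ℝ) • D₀ + Δ - ((d : ℤ) : ℝ) • latCoe Δ₁) := by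
    rw [hE2]
    obtain ⟨v, hv, hvle⟩ := hcube (-u) (fun i => by rw [Pi.neg_apply, abs_neg]; exact hu i)
    have h1 := hsmul (D * α / 2) D₀ (by positivity)
    have h2 := hsmul (D / 2) (-u) (by positivity)
    have h3 := hsuper ((D * α / 2) • D₀) ((D / 2) • (-u))
    have h4 := hvert v hv
    have h5 : (D / 2) * m v ≤ (D / 2) * m (-u) :=
      mul_le_mul_of_nonneg_left hvle (by positivity)
    nlinarith
  have hm3 : 0 ≤ m (((2 * d - r - lam - 1 : ℤ) : ℝ) • D₀ - Δ + ((2 * d - r : ℤ) : ℝ) • latCoe Δ₁) := by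
    rw [hE3]
    obtain ⟨v, hv, hvle⟩ := hcube u hu
    have h1 := hsmul (Nr * α / 2) D₀ (by positivity)
    have h2 := hsmul (Nr / 2) u (by positivity)
    have h2' := hsmul ((D - R) / D) Δ (by positivity)
    have h3 := hsuper ((Nr / 2) • u) (((D - R) / D) • Δ)
    have h3' := hsuper ((Nr * α / 2) • D₀) ((Nr / 2) • u + ((D - R) / D) • Δ)
    have h4 := hvert v hv
    have h5 : (Nr / 2) * m v ≤ (Nr / 2) * m u :=
      mul_le_mul_of_nonneg_left hvle (by positivity)
    have h6 := hmσ Δ hΔ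
    have h7 : 0 ≤ ((D - R) / D) * m Δ := mul_nonneg (by positivity) h6
    nlinarith
  -- lattice point membership
  have hm1 : 0 ≤ m (latCoe Δ₁) := by
    have hid : latCoe Δ₁ = (1 / Nr) • ((((2 * d - r - lam - 1 : ℤ) : ℝ) • D₀ - Δ
        + ((2 * d - r : ℤ) : ℝ) • latCoe Δ₁) + Δ + (L + 1 - Nr) • D₀) := by
      funext i
      simp only [Pi.add_apply, Pi.sub_apply, Pi.smul_apply, smul_eq_mul]
      push_cast
      rw [← hLdef, ← hDdef, ← hRdef]
      have h2D : (2 * D - R) = Nr := by rw [hNrdef]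
      rw [h2D]
      have : (Nr - L - 1) * D₀ i - Δ i + Nr * latCoe Δ₁ i + Δ i + (L + 1 - Nr) * D₀ i
          = Nr * latCoe Δ₁ i := by ring
      rw [this, one_div, inv_mul_cancel_left₀ hNr0]
    rw [hid]
    have h1 := hsmul (1 / Nr) ((((2 * d - r - lam - 1 : ℤ) : ℝ) • D₀ - Δ
        + ((2 * d - r : ℤ) : ℝ) • latCoe Δ₁) + Δ + (L + 1 - Nr) • D₀) (by positivity)
    have h2 := hsuper ((((2 * d - r - lam - 1 : ℤ) : ℝ) • D₀ - Δ
        + ((2 * d - r : ℤ) : ℝ) • latCoe Δ₁) + Δ) ((L + 1 - Nr) • D₀)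
    have h3 := hsuper ((((2 * d - r - lam - 1 : ℤ) : ℝ) • D₀ - Δ
        + ((2 * d - r : ℤ) : ℝ) • latCoe Δ₁)) Δ
    have h4 := hsmul (L + 1 - Nr) D₀ hLN
    have h5 := hmσ Δ hΔ
    have h6 : 0 ≤ (L + 1 - Nr) * m D₀ := mul_nonneg hLN (le_of_lt hmD₀)
    have h7 : 0 ≤ (1 / Nr) := by positivity
    nlinarith
  exact ⟨Δ₁, hmem _ hm1, hmem _ hm2, hmem _ hm3⟩
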